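/- Every tailless dominant weight diagram of atypicality degree k > 0 can be transformed into a typical (atypicality 0) diagram by a finite sequence of elementary changes of types a), b), c), at), bt), ct) (and sign switches), none of which increases the degree of atypicality when read in the reverse direction; i.e., the rewriting system given by the elementary changes terminates at atypicality 0. -/

import Mathlib

/-- Symbols of a weight diagram. -/
inductive WSym where
  | empty | lt | gt | cross
deriving DecidableEq

/-- A dominant `SOSP(2m+1,2n)` weight diagram: `body s` is the symbol at the
non-tail position `s + 3/2`; the tail position `1/2` carries `tailX` crosses,
possibly a core symbol (`some true = >`, `some false = <`), and the diagram may
carry a sign (`sign = true` is `(+)`, relevant when `tailCore = none` and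
`tailX > 0`). -/
structure ODiag where
  body : ℕ → WSym
  tailX : ℕ
  tailCore : Option Bool
  sign : Bool

/-- The degree of atypicality: the total number of crosses. -/
noncomputable def atyp (d : ODiag) : ℕ :=
  d.tailX + {s | d.body s = WSym.cross}.ncard

/-- Modify a diagram body at the two adjacent positions `s`, `s + 1`. -/
def updTwo (f : ℕ → WSym) (s : ℕ) (x y : WSym) : ℕ → WSym :=
  fun t => if t = s then x else if t = s + 1 then y else f t

/-- The elementary changes a), b), c), at), bt), ct) of Section 6.3, together with
the sign switch. -/
inductive ElemStep : ODiag → ODiag → Prop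
  /-- a) `(×,∘) → (>,<)` at adjacent non-tail positions. -/
  | a (d : ODiag) (s : ℕ) (h1 : d.body s = WSym.cross) (h2 : d.body (s+1) = WSym.empty) :
      ElemStep d ⟨updTwo d.body s WSym.gt WSym.lt, d.tailX, d.tailCore, d.sign⟩
  /-- b), c) rightward: `(x,∘) → (∘,x)` for a core symbol `x`. -/
  | bcRight (d : ODiag) (s : ℕ) (x : WSym) (hx : x = WSym.lt ∨ x = WSym.gt)
      (h1 : d.body s = x) (h2 : d.body (s+1) = WSym.empty) :
      ElemStep d ⟨updTwo d.body s WSym.empty x, d.tailX, d.tailCore, d.sign⟩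
  /-- b), c) leftward: `(∘,x) → (x,∘)` for a core symbol `x`. -/
  | bcLeft (d : ODiag) (s : ℕ) (x : WSym) (hx : x = WSym.lt ∨ x = WSym.gt)
      (h1 : d.body s = WSym.empty) (h2 : d.body (s+1) = x) :
      ElemStep d ⟨updTwo d.body s x WSym.empty, d.tailX, d.tailCore, d.sign⟩
  /-- at) `(+)×^{k+1} ∘ → {>,×^k} <`. -/
  | at_ (d : ODiag) (k : ℕ) (hk : d.tailX = k + 1) (hcore : d.tailCore = none)
      (hsign : d.sign = true) (h0 : d.body 0 = WSym.empty) :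
      ElemStep d ⟨fun t => if t = 0 then WSym.lt else d.body t, k, some true, true⟩
  /-- bt) `{>,×^k} ∘ → (−)×^k >`. -/
  | btRight (d : ODiag) (hcore : d.tailCore = some true) (h0 : d.body 0 = WSym.empty) :
      ElemStep d ⟨fun t => if t = 0 then WSym.gt else d.body t, d.tailX, none, false⟩
  /-- bt) `(−)×^k > → {>,×^k} ∘`. -/
  | btLeft (d : ODiag) (hcore : d.tailCore = none) (hsign : d.sign = false)
      (h0 : d.body 0 = WSym.gt) :
      ElemStep d ⟨fun t => if t = 0 then WSym.empty else d.body t, d.tailX, some true, true⟩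
  /-- ct) `{<,×^k} ∘ → (−)×^k <`. -/
  | ctRight (d : ODiag) (hcore : d.tailCore = some false) (h0 : d.body 0 = WSym.empty) :
      ElemStep d ⟨fun t => if t = 0 then WSym.lt else d.body t, d.tailX, none, false⟩
  /-- ct) `(−)×^k < → {<,×^k} ∘`. -/
  | ctLeft (d : ODiag) (hcore : d.tailCore = none) (hsign : d.sign = false)
      (h0 : d.body 0 = WSym.lt) :
      ElemStep d ⟨fun t => if t = 0 then WSym.empty else d.body t, d.tailX, some false, true⟩
  /-- The sign switch `(±)×^k … → (∓)×^k …`. -/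
  | sw (d : ODiag) (hcore : d.tailCore = none) (hX : 0 < d.tailX) :
      ElemStep d ⟨d.body, d.tailX, none, !d.sign⟩

section Aux

open Set

lemma atyp_mk (b : ℕ → WSym) (x : ℕ) (c : Option Bool) (g : Bool) :
    atyp ⟨b, x, c, g⟩ = x + {t | b t = WSym.cross}.ncard := rfl

lemma CB_a (d : ODiag) (s : ℕ) (h1 : d.body s = WSym.cross) (h2 : d.body (s+1) = WSym.empty) :
    {t | updTwo d.body s WSym.gt WSym.lt t = WSym.cross} = {t | d.body t = WSym.cross} \ {s} := by
  ext t
  simp only [updTwo, Set.mem_setOf_eq, Set.mem_diff, Set.mem_singleton_iff]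
  split_ifs with h h'
  · subst h; simp [h1]
  · subst h'; simp [h2]
  · simp [h]

lemma step_mono (d e : ODiag) (h : ElemStep d e) : atyp e ≤ atyp d := by
  cases h with
  | a s h1 h2 =>
      rw [atyp_mk, CB_a d s h1 h2, atyp]
      exact Nat.add_le_add_left (Set.ncard_diff_singleton_le _ _) _
  | bcRight s x hx h1 h2 =>
      rw [atyp_mk, atyp]
      have hset : {t | updTwo d.body s WSym.empty x t = WSym.cross}
          = {t | d.body t = WSym.cross} := by
        ext t
        simp only [updTwo, Set.mem_setOf_eq]
        rcases hx with rfl | rfl <;> split_ifs with h h' <;> simp_all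
      rw [hset]
  | bcLeft s x hx h1 h2 =>
      rw [atyp_mk, atyp]
      have hset : {t | updTwo d.body s x WSym.empty t = WSym.cross}
          = {t | d.body t = WSym.cross} := by
        ext t
        simp only [updTwo, Set.mem_setOf_eq]
        rcases hx with rfl | rfl <;> split_ifs with h h' <;> simp_all
      rw [hset]
  | at_ k hk hcore hsign h0 =>
      rw [atyp_mk, atyp, hk]
      have hset : {t | (if t = 0 then WSym.lt else d.body t) = WSym.cross}
          = {t | d.body t = WSym.cross} := by
        ext t
        simp only [Set.mem_setOf_eq]
        split_ifs with h
        · subst h; simp [h0]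
        · rfl
      rw [hset]; omega
  | btRight hcore h0 =>
      rw [atyp_mk, atyp]
      have hset : {t | (if t = 0 then WSym.gt else d.body t) = WSym.cross}
          = {t | d.body t = WSym.cross} := by
        ext t
        simp only [Set.mem_setOf_eq]
        split_ifs with h
        · subst h; simp [h0]
        · rfl
      rw [hset]
  | btLeft hcore hsign h0 =>
      rw [atyp_mk, atyp]
      have hset : {t | (if t = 0 then WSym.empty else d.body t) = WSym.cross}
          = {t | d.body t = WSym.cross} := by
        ext t
        simp only [Set.mem_setOf_eq]
        split_ifs with h
        · subst h; simp [h0]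
        · rfl
      rw [hset]
  | ctRight hcore h0 =>
      rw [atyp_mk, atyp]
      have hset : {t | (if t = 0 then WSym.lt else d.body t) = WSym.cross}
          = {t | d.body t = WSym.cross} := by
        ext t
        simp only [Set.mem_setOf_eq]
        split_ifs with h
        · subst h; simp [h0]
        · rfl
      rw [hset]
  | ctLeft hcore hsign h0 =>
      rw [atyp_mk, atyp]
      have hset : {t | (if t = 0 then WSym.empty else d.body t) = WSym.cross}
          = {t | d.body t = WSym.cross} := by
        ext t
        simp only [Set.mem_setOf_eq]
        split_ifs with h
        · subst h; simp [h0]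
        · rfl
      rw [hset]
  | sw hcore hX =>
      rw [atyp_mk, atyp]

lemma mkEmpty : ∀ (n : ℕ) (d : ODiag) (s : ℕ),
    d.body (s + n) = WSym.empty →
    (∀ i, i < n → d.body (s + i) = WSym.lt ∨ d.body (s + i) = WSym.gt) →
    ∃ e : ODiag, Relation.ReflTransGen ElemStep d e ∧
      e.body s = WSym.empty ∧
      (∀ t, e.body t = WSym.cross ↔ d.body t = WSym.cross) ∧
      e.tailX = d.tailX ∧ e.tailCore = d.tailCore ∧ e.sign = d.sign ∧
      {t | e.body t ≠ WSym.empty} ⊆ {t | d.body t ≠ WSym.empty} ∪ Set.Iic (s + n) := by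
  intro n
  induction n with
  | zero =>
      intro d s h0 _
      exact ⟨d, .refl, h0, fun _ => Iff.rfl, rfl, rfl, rfl, fun t ht => Or.inl ht⟩
  | succ n ih =>
      intro d s h0 hc
      have hx := hc n (Nat.lt_succ_self n)
      have h2 : d.body (s + n + 1) = WSym.empty := h0
      have step : ElemStep d ⟨updTwo d.body (s+n) WSym.empty (d.body (s+n)), d.tailX, d.tailCore, d.sign⟩ :=
        ElemStep.bcRight d (s+n) (d.body (s+n)) hx rfl h2
      set d1 : ODiag := ⟨updTwo d.body (s+n) WSym.empty (d.body (s+n)), d.tailX, d.tailCore, d.sign⟩ with hd1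
      have h01 : d1.body (s + n) = WSym.empty := by simp [hd1, updTwo]
      have hc1 : ∀ i, i < n → d1.body (s + i) = WSym.lt ∨ d1.body (s + i) = WSym.gt := by
        intro i hi
        have e1 : d1.body (s+i) = d.body (s+i) := by
          simp only [hd1, updTwo]
          rw [if_neg (by omega), if_neg (by omega)]
        rw [e1]; exact hc i (by omega)
      obtain ⟨e, he, h0e, hcr, hX, hC, hS, hsub⟩ := ih d1 s h01 hc1
      refine ⟨e, Relation.ReflTransGen.head step he, h0e, ?_, hX, hC, hS, ?_⟩
      · intro t
        rw [hcr t]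
        show updTwo d.body (s+n) WSym.empty (d.body (s+n)) t = WSym.cross ↔ _
        rw [updTwo]
        split_ifs with h h'
        · subst h
          rcases hx with hx | hx <;> simp [hx]
        · subst h'
          rcases hx with hx | hx <;> simp [hx, h2]
        · exact Iff.rfl
      · intro t ht
        rcases hsub ht with h | h
        · have h'' : updTwo d.body (s+n) WSym.empty (d.body (s+n)) t ≠ WSym.empty := h
          rw [updTwo] at h''
          split_ifs at h'' with h1 h1'
          · exact absurd rfl h''
          · exact Or.inr (by simp only [Set.mem_Iic]; omega)
          · exact Or.inl h''
        · exact Or.inr (Set.Iic_subset_Iic.mpr (by omega) h)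

lemma clearAt (d : ODiag) (s : ℕ)
    (hnc : ∀ t, s ≤ t → d.body t ≠ WSym.cross)
    (hfin : {t | d.body t ≠ WSym.empty}.Finite) :
    ∃ e : ODiag, Relation.ReflTransGen ElemStep d e ∧ e.body s = WSym.empty ∧
      (∀ t, e.body t = WSym.cross ↔ d.body t = WSym.cross) ∧
      e.tailX = d.tailX ∧ e.tailCore = d.tailCore ∧ e.sign = d.sign ∧
      {t | e.body t ≠ WSym.empty}.Finite := by
  obtain ⟨B, hB⟩ := hfin.bddAbove
  have hP : ∃ n, d.body (s + n) = WSym.empty := by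
    refine ⟨B + 1, ?_⟩
    by_contra h
    have h2 : s + (B + 1) ≤ B := hB h
    omega
  have hn : d.body (s + Nat.find hP) = WSym.empty := Nat.find_spec hP
  have hlt : ∀ i, i < Nat.find hP → d.body (s+i) = WSym.lt ∨ d.body (s+i) = WSym.gt := by
    intro i hi
    have h1 : ¬ d.body (s+i) = WSym.empty := Nat.find_min hP hi
    have h2 : d.body (s+i) ≠ WSym.cross := hnc _ (by omega)
    cases hcase : d.body (s+i) <;> simp_all
  obtain ⟨e, he, h0, hcr, hX, hC, hS, hsub⟩ := mkEmpty (Nat.find hP) d s hn hlt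
  exact ⟨e, he, h0, hcr, hX, hC, hS, (hfin.union (Set.finite_Iic _)).subset hsub⟩

lemma noCross : ∀ (k : ℕ) (d : ODiag), {t | d.body t ≠ WSym.empty}.Finite →
    {t | d.body t = WSym.cross}.ncard ≤ k →
    ∃ e : ODiag, Relation.ReflTransGen ElemStep d e ∧ (∀ t, e.body t ≠ WSym.cross) ∧
      {t | e.body t ≠ WSym.empty}.Finite := by
  intro k
  induction k with
  | zero =>
      intro d hfin hcard
      have hCfin : {t | d.body t = WSym.cross}.Finite :=
        hfin.subset (by intro t ht; simp_all)
      have hemp : {t | d.body t = WSym.cross} = ∅ := by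
        rw [← Set.ncard_eq_zero hCfin]; omega
      exact ⟨d, .refl, fun t ht => (Set.eq_empty_iff_forall_notMem.mp hemp t) ht, hfin⟩
  | succ k ih =>
      intro d hfin hcard
      have hCfin : {t | d.body t = WSym.cross}.Finite :=
        hfin.subset (by intro t ht; simp_all)
      by_cases hemp : {t | d.body t = WSym.cross} = ∅
      · exact ⟨d, .refl, fun t ht => (Set.eq_empty_iff_forall_notMem.mp hemp t) ht, hfin⟩
      · have hne : hCfin.toFinset.Nonempty := by
          rw [Finset.nonempty_iff_ne_empty]
          intro hcon
          exact hemp (Set.Finite.toFinset_eq_empty.mp hcon)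
        set s := hCfin.toFinset.max' hne with hs_def
        have hs : d.body s = WSym.cross := by
          have := hCfin.toFinset.max'_mem hne
          simpa [Set.Finite.mem_toFinset] using this
        have hmax : ∀ t, d.body t = WSym.cross → t ≤ s :=
          fun t ht => hCfin.toFinset.le_max' t (by simpa [Set.Finite.mem_toFinset] using ht)
        have hnc : ∀ t, s + 1 ≤ t → d.body t ≠ WSym.cross := by
          intro t ht hcon
          have := hmax t hcon
          omega
        obtain ⟨d1, hd1, h0, hcr, _, _, _, hfin1⟩ := clearAt d (s+1) hnc hfin
        have h1 : d1.body s = WSym.cross := (hcr s).mpr hs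
        have step := ElemStep.a d1 s h1 h0
        set d2 : ODiag := ⟨updTwo d1.body s WSym.gt WSym.lt, d1.tailX, d1.tailCore, d1.sign⟩ with hd2
        have hC1 : {t | d1.body t = WSym.cross} = {t | d.body t = WSym.cross} :=
          Set.ext fun t => hcr t
        have hC2 : {t | d2.body t = WSym.cross} = {t | d.body t = WSym.cross} \ {s} := by
          rw [← hC1]; exact CB_a d1 s h1 h0
        have hfin2 : {t | d2.body t ≠ WSym.empty}.Finite := by
          apply (hfin1.union (Set.finite_singleton (s+1))).subset
          intro t ht
          have h'' : updTwo d1.body s WSym.gt WSym.lt t ≠ WSym.empty := ht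
          rw [updTwo] at h''
          split_ifs at h'' with ha hb
          · exact Or.inl (by simp only [Set.mem_setOf_eq, ha, h1]; simp)
          · exact Or.inr (by simp [hb])
          · exact Or.inl h''
        have hcard2 : {t | d2.body t = WSym.cross}.ncard ≤ k := by
          rw [hC2]
          have hltc := Set.ncard_diff_singleton_lt_of_mem (show s ∈ {t | d.body t = WSym.cross} from hs) hCfin
          omega
        obtain ⟨e, he, hnc', hfine⟩ := ih d2 hfin2 hcard2
        exact ⟨e, hd1.trans (Relation.ReflTransGen.head step he), hnc', hfine⟩

lemma tailStep (k : ℕ) (d : ODiag) (hX : d.tailX = k+1) (hC : d.tailCore = none)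
    (hnc : ∀ t, d.body t ≠ WSym.cross) (hfin : {t | d.body t ≠ WSym.empty}.Finite) :
    ∃ e : ODiag, Relation.ReflTransGen ElemStep d e ∧ e.tailX = k ∧ e.tailCore = some true ∧
      (∀ t, e.body t ≠ WSym.cross) ∧ {t | e.body t ≠ WSym.empty}.Finite := by
  obtain ⟨d1, hd1, h0, hcr, hX1, hC1, hS1, hfin1⟩ := clearAt d 0 (fun t _ => hnc t) hfin
  have hcore1 : d1.tailCore = none := hC1.trans hC
  have hX1' : d1.tailX = k + 1 := hX1.trans hX
  have hd2 : ∃ d2 : ODiag, Relation.ReflTransGen ElemStep d1 d2 ∧ d2.body = d1.body ∧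
      d2.tailX = d1.tailX ∧ d2.tailCore = none ∧ d2.sign = true := by
    by_cases hsg : d1.sign = true
    · exact ⟨d1, .refl, rfl, rfl, hcore1, hsg⟩
    · refine ⟨⟨d1.body, d1.tailX, none, !d1.sign⟩,
        Relation.ReflTransGen.single (ElemStep.sw d1 hcore1 (by omega)), rfl, rfl, rfl, ?_⟩
      simp only [Bool.not_eq_true] at hsg
      simp [hsg]
  obtain ⟨d2, hd2r, hb2, hX2, hC2, hS2⟩ := hd2
  have h02 : d2.body 0 = WSym.empty := by rw [hb2]; exact h0
  have step := ElemStep.at_ d2 k (by rw [hX2, hX1']) hC2 hS2 h02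
  refine ⟨⟨fun t => if t = 0 then WSym.lt else d2.body t, k, some true, true⟩,
    hd1.trans (hd2r.trans (Relation.ReflTransGen.single step)), rfl, rfl, ?_, ?_⟩
  · intro t
    show (if t = 0 then WSym.lt else d2.body t) ≠ WSym.cross
    split_ifs with h
    · simp
    · rw [hb2]
      intro hcon
      exact hnc t ((hcr t).mp hcon)
  · apply (hfin1.union (Set.finite_singleton 0)).subset
    intro t ht
    have h'' : (if t = 0 then WSym.lt else d2.body t) ≠ WSym.empty := ht
    split_ifs at h'' with h
    · exact Or.inr (by simp [h])
    · exact Or.inl (by rw [← hb2]; exact h'')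

lemma tailElim : ∀ (k : ℕ) (d : ODiag), d.tailX = k → (∀ t, d.body t ≠ WSym.cross) →
    {t | d.body t ≠ WSym.empty}.Finite →
    ∃ e : ODiag, Relation.ReflTransGen ElemStep d e ∧ atyp e = 0 := by
  intro k
  induction k with
  | zero =>
      intro d hX hnc _
      refine ⟨d, .refl, ?_⟩
      have hemp : {s | d.body s = WSym.cross} = ∅ :=
        Set.eq_empty_iff_forall_notMem.mpr fun t ht => hnc t ht
      rw [atyp, hX, hemp]
      simp
  | succ k ih =>
      intro d hX hnc hfin
      cases hcore : d.tailCore with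
      | none =>
          obtain ⟨e1, he1, hX1, _, hnc1, hfin1⟩ := tailStep k d hX hcore hnc hfin
          obtain ⟨e, he, ha⟩ := ih e1 hX1 hnc1 hfin1
          exact ⟨e, he1.trans he, ha⟩
      | some b =>
          obtain ⟨d1, hd1, h0, hcr, hX1, hC1, hS1, hfin1⟩ := clearAt d 0 (fun t _ => hnc t) hfin
          have hcore1 : d1.tailCore = some b := hC1.trans hcore
          have hstep : ∃ d2 : ODiag, ElemStep d1 d2 ∧
              d2.body = (fun t => if t = 0 then (if b then WSym.gt else WSym.lt) else d1.body t) ∧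
              d2.tailX = d1.tailX ∧ d2.tailCore = none := by
            cases b
            · exact ⟨_, ElemStep.ctRight d1 hcore1 h0, rfl, rfl, rfl⟩
            · exact ⟨_, ElemStep.btRight d1 hcore1 h0, rfl, rfl, rfl⟩
          obtain ⟨d2, hstep2, hb2, hX2, hC2⟩ := hstep
          have hnc2 : ∀ t, d2.body t ≠ WSym.cross := by
            intro t
            rw [hb2]
            show (if t = 0 then (if b = true then WSym.gt else WSym.lt) else d1.body t) ≠ WSym.cross
            by_cases h : t = 0
            · rw [if_pos h]
              cases b <;> simp
            · rw [if_neg h]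
              intro hcon
              exact hnc t ((hcr t).mp hcon)
          have hfin2 : {t | d2.body t ≠ WSym.empty}.Finite := by
            apply (hfin1.union (Set.finite_singleton 0)).subset
            intro t ht
            have h'' : (if t = 0 then (if b = true then WSym.gt else WSym.lt) else d1.body t)
                ≠ WSym.empty := by rw [hb2] at ht; exact ht
            by_cases h : t = 0
            · exact Or.inr (by simp [h])
            · rw [if_neg h] at h''
              exact Or.inl h''
          obtain ⟨e1, he1, hX1', hC1', hnc1', hfin1'⟩ :=
            tailStep k d2 (by rw [hX2, hX1, hX]) hC2 hnc2 hfin2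
          obtain ⟨e, he, ha⟩ := ih e1 hX1' hnc1' hfin1'
          exact ⟨e, hd1.trans ((Relation.ReflTransGen.single hstep2).trans (he1.trans he)), ha⟩

end Aux

/-- **Lemma 8 (termination of the rewriting system).**  No elementary change
increases the degree of atypicality, and every dominant weight diagram (with
finitely many symbols in the body) can be transformed by a finite sequence of
elementary changes into a typical diagram, i.e. one of atypicality `0`. -/
theorem stmt14 :
    (∀ d e : ODiag, ElemStep d e → atyp e ≤ atyp d) ∧
    (∀ d : ODiag, {s | d.body s ≠ WSym.empty}.Finite →
      ∃ e : ODiag, Relation.ReflTransGen ElemStep d e ∧ atyp e = 0) := by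
  constructor
  · exact step_mono
  · intro d hfin
    obtain ⟨e1, he1, hnc1, hfin1⟩ := noCross ({t | d.body t = WSym.cross}.ncard) d hfin le_rfl
    obtain ⟨e, he, ha⟩ := tailElim e1.tailX e1 rfl hnc1 hfin1
    exact ⟨e, he1.trans he, ha⟩
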